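/- Let G be a finite abelian group and let b : G × G → ℂ/2ℤ be a symmetric ℤ-bilinear form (i.e., b is additive in each variable and b(x,y) = b(y,x) for all x, y ∈ G), which may be degenerate. Then there exist a finite abelian group G̃, an injective group homomorphism ι : G → G̃, and a symmetric ℤ-bilinear form b̃ : G̃ × G̃ → ℂ/2ℤ such that b̃(ι(x), ι(y)) = b(x, y) for all x, y ∈ G and such that b̃ is nondegenerate: if g ∈ G̃ satisfies b̃(g, g') = 0 for all g' ∈ G̃, then g = 0. -/

import Mathlib

/-- `ℂ/2ℤ`: the quotient of the additive group of complex numbers by the subgroup of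
even integers. -/
abbrev CMod2Z := ℂ ⧸ AddSubgroup.zmultiples (2 : ℂ)

noncomputable def doubleQC : ℚ →+ ℂ :=
  AddMonoidHom.mk' (fun q : ℚ => (2 * q : ℂ)) (by intro a b; push_cast; ring)

noncomputable def embQC : AddCircle (1 : ℚ) →+ CMod2Z :=
  QuotientAddGroup.map _ _ doubleQC (by
    intro x hx
    obtain ⟨k, hk⟩ := AddSubgroup.mem_zmultiples_iff.mp hx
    refine AddSubgroup.mem_zmultiples_iff.mpr ⟨k, ?_⟩
    simp only [doubleQC, AddMonoidHom.mk'_apply, ← hk, zsmul_eq_mul, smul_eq_mul]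
    push_cast
    ring)

lemma embQC_coe (q : ℚ) : embQC (q : AddCircle (1:ℚ)) = ((2 * q : ℂ) : CMod2Z) := rfl

lemma embQC_eq_zero {x : AddCircle (1:ℚ)} (h : embQC x = 0) : x = 0 := by
  induction x using QuotientAddGroup.induction_on with
  | H q =>
    rw [embQC_coe, QuotientAddGroup.eq_zero_iff, AddSubgroup.mem_zmultiples_iff] at h
    obtain ⟨k, hk⟩ := h
    rw [zsmul_eq_mul] at hk
    have hq : (q : ℚ) = (k : ℚ) := by
      have : ((q : ℚ) : ℂ) = ((k : ℚ) : ℂ) := by push_cast at hk ⊢; linear_combination -hk/2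
      exact_mod_cast this
    rw [QuotientAddGroup.eq_zero_iff, AddSubgroup.mem_zmultiples_iff]
    exact ⟨k, by simp [hq]⟩

lemma finite_characterModule (G : Type) [AddCommGroup G] [Fintype G] :
    Finite (CharacterModule G) := by
  set n := Fintype.card G with hn
  have hn0 : 0 < n := Fintype.card_pos
  have hnQ : ((n : ℚ)) ≠ 0 := by exact_mod_cast hn0.ne'
  have hS : Finite {x : AddCircle (1:ℚ) // n • x = 0} := by
    apply Finite.of_surjective (f := fun k : Fin n =>
      (⟨(((k : ℚ)/n : ℚ) : AddCircle (1:ℚ)), by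
        rw [← QuotientAddGroup.mk_nsmul, QuotientAddGroup.eq_zero_iff,
          AddSubgroup.mem_zmultiples_iff]
        exact ⟨k, by rw [zsmul_eq_mul, nsmul_eq_mul, mul_one]; push_cast; field_simp⟩⟩ : {x : AddCircle (1:ℚ) // n • x = 0}))
    rintro ⟨x, hx⟩
    induction x using QuotientAddGroup.induction_on with
    | H q =>
      rw [← QuotientAddGroup.mk_nsmul, QuotientAddGroup.eq_zero_iff,
        AddSubgroup.mem_zmultiples_iff] at hx
      obtain ⟨m, hm⟩ := hx
      have hm' : (m : ℚ) = n * q := by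
        have := hm
        simp only [nsmul_eq_mul, zsmul_eq_mul, mul_one] at this
        exact this
      have hq : q = (m : ℚ) / n := by field_simp; linarith [hm']
      have h1 : (0:ℤ) ≤ m % n := Int.emod_nonneg m (by exact_mod_cast hn0.ne')
      have h2 : m % n < n := Int.emod_lt_of_pos m (by exact_mod_cast hn0)
      refine ⟨⟨(m % n).toNat, by omega⟩, ?_⟩
      apply Subtype.ext
      show ((((m % (n:ℤ)).toNat : ℚ) / n : ℚ) : AddCircle (1:ℚ)) = (q : AddCircle (1:ℚ))
      rw [QuotientAddGroup.eq, AddSubgroup.mem_zmultiples_iff]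
      refine ⟨m / n, ?_⟩
      have key : ((m % (n:ℤ)).toNat : ℚ) = (m:ℚ) - n * ((m / (n:ℤ) : ℤ) : ℚ) := by
        have : ((m % (n:ℤ)).toNat : ℤ) = m - (n:ℤ) * (m / (n:ℤ)) := by
          rw [Int.toNat_of_nonneg h1, Int.emod_def]
        exact_mod_cast congrArg (fun z : ℤ => (z : ℚ)) this
      rw [zsmul_eq_mul, key, hq]
      field_simp
      ring
  have hcard : ∀ g : G, n • g = 0 := fun g => by
    simpa [hn] using card_nsmul_eq_zero (G := G) (g := g)
  apply Finite.of_injective (f := fun φ : CharacterModule G =>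
    (fun g : G => (⟨φ g, by rw [← map_nsmul, hcard, map_zero]⟩ : {x : AddCircle (1:ℚ) // n • x = 0})))
  intro φ ψ h
  ext g
  exact congrArg Subtype.val (congrFun h g)

lemma charAdd_apply {A : Type} [AddCommGroup A] (c c' : CharacterModule A) (a : A) :
    (c + c') a = c a + c' a := rfl

lemma charZero_apply {A : Type} [AddCommGroup A] (a : A) :
    (0 : CharacterModule A) a = 0 := rfl


/-- A nondegenerate extension of a symmetric `ℂ/2ℤ`-valued ℤ-bilinear form `b` on a
finite abelian group `G`: a finite abelian group `G̃` together with an injective group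
homomorphism `ι : G → G̃` and a symmetric ℤ-bilinear form `b̃` on `G̃` extending `b`
through `ι` and nondegenerate. -/
structure NondegFiniteExtension (G : Type) [AddCommGroup G] (b : G → G → CMod2Z) where
  carrier : Type
  [addCommGroup : AddCommGroup carrier]
  [fintype : Fintype carrier]
  emb : G → carrier
  emb_add : ∀ x y : G, emb (x + y) = emb x + emb y
  emb_inj : Function.Injective emb
  form : carrier → carrier → CMod2Z
  form_add_left : ∀ x y z : carrier, form (x + y) z = form x z + form y z
  form_add_right : ∀ x y z : carrier, form x (y + z) = form x y + form x z
  form_symm : ∀ x y : carrier, form x y = form y x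
  form_compat : ∀ x y : G, form (emb x) (emb y) = b x y
  form_nondeg : ∀ g : carrier, (∀ g' : carrier, form g g' = 0) → g = 0

/-- Every symmetric `ℂ/2ℤ`-valued ℤ-bilinear form (possibly degenerate) on a
finite abelian group extends, through an injective homomorphism into a finite abelian
group, to a nondegenerate symmetric `ℂ/2ℤ`-valued ℤ-bilinear form. -/
theorem exists_nondegenerate_extension (G : Type) [AddCommGroup G] [Fintype G]
    (b : G → G → CMod2Z)
    (hadd_left : ∀ x y z : G, b (x + y) z = b x z + b y z)
    (hadd_right : ∀ x y z : G, b x (y + z) = b x y + b x z)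
    (hsymm : ∀ x y : G, b x y = b y x) :
    Nonempty (NondegFiniteExtension G b) := by
  haveI : Finite (CharacterModule G) := finite_characterModule G
  haveI : Fintype (G × CharacterModule G) := Fintype.ofFinite _
  have hb0l : ∀ y : G, b 0 y = 0 := fun y => by
    have h := hadd_left 0 0 y
    rw [add_zero] at h
    nth_rewrite 1 [← add_zero (b 0 y)] at h
    exact (add_left_cancel h).symm
  have hb0r : ∀ y : G, b y 0 = 0 := fun y => by rw [hsymm]; exact hb0l y
  refine ⟨{
    carrier := G × CharacterModule G
    emb := fun x => (x, 0)
    emb_add := fun x y => by simp [Prod.ext_iff]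
    emb_inj := fun x y h => congrArg Prod.fst h
    form := fun p q => b p.1 q.1 + embQC (p.2 q.1) + embQC (q.2 p.1)
    form_add_left := fun x y z => by
      simp only [Prod.fst_add, Prod.snd_add, hadd_left]
      simp only [charAdd_apply, map_add]
      abel
    form_add_right := fun x y z => by
      simp only [Prod.fst_add, Prod.snd_add, hadd_right, charAdd_apply, map_add]
      abel
    form_symm := fun x y => by
      show b x.1 y.1 + embQC (x.2 y.1) + embQC (y.2 x.1)
        = b y.1 x.1 + embQC (y.2 x.1) + embQC (x.2 y.1)
      rw [hsymm x.1 y.1]; abel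
    form_compat := fun x y => by simp [charZero_apply]
    form_nondeg := ?_ }⟩
  rintro ⟨x, φ⟩ h
  have hx : x = 0 := by
    apply CharacterModule.eq_zero_of_character_apply
    intro ψ
    have := h (0, ψ)
    simp only [hb0r, charZero_apply, map_zero, zero_add, add_zero] at this
    exact embQC_eq_zero this
  subst hx
  have hφ : φ = 0 := by
    ext y
    have := h (y, 0)
    simp only [hb0l, charZero_apply, map_zero, zero_add, add_zero] at this
    exact embQC_eq_zero this
  simp [hφ, Prod.ext_iff]
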